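/- arXiv:1907.05481 — 7 statements merged into one kernel-verified Lean document; each statement's English description precedes it below -/
import Mathlib

section
/- In a quantitative reachability game, if a play ρ contains an unnecessary cycle (i.e., ρₖ = ρₖ₊ℓ with ℓ ≥ 1 and the set of players having visited their target set within the prefix up to index k equals that up to index k+ℓ), then the play ρ' obtained by removing the cycle (ρ' = ρ₀…ρₖ ρₖ₊ℓ₊₁ ρₖ₊ℓ₊₂ …) satisfies Cost_i(ρ') ≤ Cost_i(ρ) for every player i. -/
open scoped Classical

structure Arena (V : Type) where
  E : V → V → Prop
  succ : ∀ v, ∃ w, E v w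

variable {V P : Type}

/-- An infinite play: consecutive vertices are connected by edges. -/
def IsPlay (A : Arena V) (ρ : ℕ → V) : Prop := ∀ k, A.E (ρ k) (ρ (k + 1))

/-- Cost: least index of a visit to `F`, or `⊤` if never visited. -/
noncomputable def cost (F : Set V) (ρ : ℕ → V) : ℕ∞ :=
  ⨅ (k : ℕ) (_ : ρ k ∈ F), (k : ℕ∞)

/-- Qualitative gain: `1` if the play visits `F`, else `0`. -/
noncomputable def gain (F : Set V) (ρ : ℕ → V) : ℕ :=
  if ∃ n, ρ n ∈ F then 1 else 0

/-- The set of players whose target set is visited along the play. -/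
def visit (F : P → Set V) (ρ : ℕ → V) : Set P := {i | ∃ n, ρ n ∈ F i}

/-- The set of players whose target set is visited within the prefix `ρ₀…ρₖ`. -/
def visitPrefix (F : P → Set V) (ρ : ℕ → V) (k : ℕ) : Set P := {i | ∃ n ≤ k, ρ n ∈ F i}

/-- A multiplayer reachability game: an arena, an owner for each vertex,
and a target set for each player. -/
structure Game (P V : Type) extends Arena V where
  owner : V → P
  F : P → Set V

/-- A strategy maps (past history, current vertex) to the next vertex. -/
abbrev Strat (V : Type) := List V → V → V

def IsStrategy (A : Arena V) (s : Strat V) : Prop := ∀ p v, A.E v (s p v)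

noncomputable def histStep (G : Game P V) (σ : P → Strat V) :
    List V × V → List V × V :=
  fun x => (x.1 ++ [x.2], σ (G.owner x.2) x.1 x.2)

/-- The unique play from `v0` consistent with the strategy profile `σ`. -/
noncomputable def outcome (G : Game P V) (σ : P → Strat V) (v0 : V) (k : ℕ) : V :=
  ((histStep G σ)^[k] ([], v0)).2

/-- Replace the strategy of player `i` by `s` in the profile `σ`. -/
noncomputable def updProfile (σ : P → Strat V) (i : P) (s : Strat V) : P → Strat V :=
  fun j => if j = i then s else σ j

/-- Nash equilibrium for the quantitative (cost-minimizing) semantics. -/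
def IsNE (G : Game P V) (σ : P → Strat V) (v0 : V) : Prop :=
  (∀ i, IsStrategy G.toArena (σ i)) ∧
  ∀ (i : P) (s : Strat V), IsStrategy G.toArena s →
    cost (G.F i) (outcome G σ v0) ≤ cost (G.F i) (outcome G (updProfile σ i s) v0)

/-- Nash equilibrium for the qualitative (gain-maximizing) semantics. -/
def IsNEqual (G : Game P V) (σ : P → Strat V) (v0 : V) : Prop :=
  (∀ i, IsStrategy G.toArena (σ i)) ∧
  ∀ (i : P) (s : Strat V), IsStrategy G.toArena s →
    gain (G.F i) (outcome G (updProfile σ i s) v0) ≤ gain (G.F i) (outcome G σ v0)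

/-- The profile in which player `i` plays `s` and all other players (the
coalition `-i`) jointly play `t`. -/
noncomputable def coalProfile (i : P) (s t : Strat V) : P → Strat V :=
  fun j => if j = i then s else t

/-- Value of the coalitional zero-sum game `G_i` from `v`: player `i`
minimizes the first hitting time of `F i` against the coalition. -/
noncomputable def val (G : Game P V) (i : P) (v : V) : ℕ∞ :=
  ⨅ s : {s : Strat V // IsStrategy G.toArena s},
    ⨆ t : {t : Strat V // IsStrategy G.toArena t},
      cost (G.F i) (outcome G (coalProfile i s.1 t.1) v)

/-- A positional (memoryless) strategy only depends on the current vertex. -/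
def Positional (s : Strat V) : Prop := ∀ p q v, s p v = s q v

/-- An optimal strategy for the minimizer (player `i`) in `G_i`. -/
def OptimalMin (G : Game P V) (i : P) (s : Strat V) : Prop :=
  IsStrategy G.toArena s ∧
  ∀ (v : V) (t : Strat V), IsStrategy G.toArena t →
    cost (G.F i) (outcome G (coalProfile i s t) v) ≤ val G i v

/-- An optimal strategy for the maximizer (the coalition `-i`) in `G_i`. -/
def OptimalMax (G : Game P V) (i : P) (t : Strat V) : Prop :=
  IsStrategy G.toArena t ∧
  ∀ (v : V) (s : Strat V), IsStrategy G.toArena s →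
    val G i v ≤ cost (G.F i) (outcome G (coalProfile i s t) v)

/-- `λ`-consistency of a play. -/
def lambdaConsistent (G : Game P V) (lam : V → ℕ∞) (ρ : ℕ → V) : Prop :=
  ∀ (i : P) (k : ℕ), G.owner (ρ k) = i → (∀ n ≤ k, ρ n ∉ G.F i) →
    cost (G.F i) (fun j => ρ (k + j)) ≤ lam (ρ k)

/-- A lasso `hℓ^ω` of length `|hℓ| ≤ L`. -/
def IsLasso (ρ : ℕ → V) (L : ℕ) : Prop :=
  ∃ n p, 0 < p ∧ n + p ≤ L ∧ ∀ k, n ≤ k → ρ (k + p) = ρ k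

/-- The play obtained by removing the cycle `ρₖ…ρₖ₊ₗ` from `ρ`. -/
def removeCycle (ρ : ℕ → V) (k l : ℕ) : ℕ → V :=
  fun j => if j ≤ k then ρ j else ρ (j + l)

/-- `ρₖ…ρₖ₊ₗ` is an unnecessary cycle: it is a (nontrivial) cycle inside of
which no new player visits his target set. -/
def UnnecessaryCycle (F : P → Set V) (ρ : ℕ → V) (k l : ℕ) : Prop :=
  0 < l ∧ ρ k = ρ (k + l) ∧ visitPrefix F ρ k = visitPrefix F ρ (k + l)

/-- The set of cost profiles of plays from `v0`. -/
def costProfiles (G : Game P V) (v0 : V) : Set (P → ℕ∞) :=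
  {c | ∃ ρ, IsPlay G.toArena ρ ∧ ρ 0 = v0 ∧ c = fun i => cost (G.F i) ρ}

/-- The set of gain profiles of plays from `v0`. -/
def gainProfiles (G : Game P V) (v0 : V) : Set (P → ℕ) :=
  {c | ∃ ρ, IsPlay G.toArena ρ ∧ ρ 0 = v0 ∧ c = fun i => gain (G.F i) ρ}

/-- Pareto optimality for cost profiles: minimal in the componentwise order. -/
def ParetoMinimal {α : Type} [Preorder α] (S : Set α) (p : α) : Prop :=
  p ∈ S ∧ ∀ q ∈ S, q ≤ p → q = p

/-- Pareto optimality for gain profiles: maximal in the componentwise order. -/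
def ParetoMaximal {α : Type} [Preorder α] (S : Set α) (p : α) : Prop :=
  p ∈ S ∧ ∀ q ∈ S, p ≤ q → q = p

/-- `h ++ [v]` is a history from `v0`: a finite path starting at `v0`
whose current (last) vertex is `v`; `h` is the strict past. -/
def IsHist (A : Arena V) (v0 : V) (h : List V) (v : V) : Prop :=
  (h ++ [v]).head? = some v0 ∧ List.Chain' A.E (h ++ [v])

/-- The strategy `s` shifted by the past history `h` (i.e. `s|h`). -/
noncomputable def shiftStrat (s : Strat V) (h : List V) : Strat V :=
  fun p v => s (h ++ p) v

/-- Gain of a play `ρ` in the subgame after past history `h`: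
`1` iff `h·ρ` visits `F`. -/
noncomputable def gainAfter (F : Set V) (h : List V) (ρ : ℕ → V) : ℕ :=
  if (∃ x ∈ h, x ∈ F) ∨ (∃ n, ρ n ∈ F) then 1 else 0

/-- Subgame perfect equilibrium for qualitative reachability games:
in every subgame after a history from `v0`, no player can strictly
increase his gain by a unilateral deviation. -/
def IsSPEqual (G : Game P V) (σ : P → Strat V) (v0 : V) : Prop :=
  (∀ i, IsStrategy G.toArena (σ i)) ∧
  ∀ (h : List V) (v : V), IsHist G.toArena v0 h v →
    ∀ (i : P) (s : Strat V), IsStrategy G.toArena s →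
      gainAfter (G.F i) h
          (outcome G (updProfile (fun j => shiftStrat (σ j) h) i s) v) ≤
        gainAfter (G.F i) h (outcome G (fun j => shiftStrat (σ j) h) v)

/-- removing an unnecessary cycle does not increase any cost. -/
theorem stmt1 {V P : Type} [Fintype V] [Fintype P] (G : Game P V) (ρ : ℕ → V)
    (hρ : IsPlay G.toArena ρ) (k l : ℕ)
    (hcyc : UnnecessaryCycle G.F ρ k l) :
    ∀ i : P, cost (G.F i) (removeCycle ρ k l) ≤ cost (G.F i) ρ := by
  obtain ⟨hl, heq, hvis⟩ := hcyc
  intro i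
  refine le_iInf fun n => le_iInf fun hn => ?_
  -- find m ≤ n with removeCycle ρ k l m ∈ F i
  have key : ∃ m ≤ n, removeCycle ρ k l m ∈ G.F i := by
    by_cases h1 : n ≤ k
    · exact ⟨n, le_rfl, by simpa [removeCycle, h1] using hn⟩
    · push_neg at h1
      by_cases h2 : n ≤ k + l
      · have hi : i ∈ visitPrefix G.F ρ (k + l) := ⟨n, h2, hn⟩
        rw [← hvis] at hi
        obtain ⟨m, hm, hmF⟩ := hi
        exact ⟨m, le_trans hm (le_of_lt h1), by simpa [removeCycle, hm] using hmF⟩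
      · push_neg at h2
        refine ⟨n - l, Nat.sub_le _ _, ?_⟩
        have hk : ¬ n - l ≤ k := by omega
        have : n - l + l = n := by omega
        simp [removeCycle, hk, this, hn]
  obtain ⟨m, hm, hmF⟩ := key
  calc (⨅ (j : ℕ) (_ : removeCycle ρ k l j ∈ G.F i), (j : ℕ∞)) ≤ (m : ℕ∞) :=
        iInf₂_le m hmF
    _ ≤ (n : ℕ∞) := by exact_mod_cast hm
end

section
/- In a quantitative reachability game, if a play ρ is λ-consistent for a labeling function λ : V → ℕ∞, and ρ' is obtained from ρ by removing an unnecessary cycle, then ρ' is also λ-consistent. -/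
open scoped Classical

variable {V P : Type}

lemma cost_mono_of_visits {V : Type} {F : Set V} {σ τ : ℕ → V}
    (h : ∀ j, τ j ∈ F → ∃ j' ≤ j, σ j' ∈ F) : cost F σ ≤ cost F τ := by
  refine le_iInf₂ fun j hj => ?_
  obtain ⟨j', hle, hm⟩ := h j hj
  calc cost F σ ≤ (j' : ℕ∞) := iInf₂_le j' hm
    _ ≤ (j : ℕ∞) := by exact_mod_cast hle

lemma removeCycle_ge {V : Type} {ρ : ℕ → V} {k l n : ℕ}
    (hcy : ρ k = ρ (k + l)) (hn : k ≤ n) :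
    removeCycle ρ k l n = ρ (n + l) := by
  unfold removeCycle
  split_ifs with h
  · have : n = k := le_antisymm h hn
    subst this; exact hcy
  · rfl

/-- removing an unnecessary cycle preserves `λ`-consistency. -/
theorem stmt4 {V P : Type} (G : Game P V) (lam : V → ℕ∞) (ρ : ℕ → V)
    (hρ : IsPlay G.toArena ρ) (hcons : lambdaConsistent G lam ρ)
    (k l : ℕ) (hcyc : UnnecessaryCycle G.F ρ k l) :
    lambdaConsistent G lam (removeCycle ρ k l) := by
  obtain ⟨hl, hcy, hvis⟩ := hcyc
  intro i m hown hnot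
  rcases le_or_gt m k with hm | hm
  · have hρ'm : removeCycle ρ k l m = ρ m := if_pos hm
    have hnot' : ∀ n ≤ m, ρ n ∉ G.F i := fun n hn => by
      have := hnot n hn
      rwa [removeCycle, if_pos (hn.trans hm)] at this
    have h1 := hcons i m (by rwa [hρ'm] at hown) hnot'
    rw [hρ'm]
    refine le_trans (cost_mono_of_visits ?_) h1
    intro j hj
    rcases le_or_gt (m + j) k with h2 | h2
    · exact ⟨j, le_refl j, by simpa [removeCycle, h2] using hj⟩
    · rcases le_or_gt (k + l) (m + j) with h3 | h3
      · refine ⟨j - l, Nat.sub_le _ _, ?_⟩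
        rw [removeCycle_ge hcy (by omega)]
        have : m + (j - l) + l = m + j := by omega
        rwa [this]
      · have hivis : i ∈ visitPrefix G.F ρ (k + l) := ⟨m + j, by omega, hj⟩
        rw [← hvis] at hivis
        obtain ⟨n, hnk, hmem⟩ := hivis
        have hnm : m < n := by
          by_contra h
          exact hnot' n (by omega) hmem
        refine ⟨n - m, by omega, ?_⟩
        rw [removeCycle, if_pos (by omega : m + (n - m) ≤ k)]
        have : m + (n - m) = n := by omega
        rwa [this]
  · have hρ'm : removeCycle ρ k l m = ρ (m + l) := if_neg (by omega)
    have hnotρ : ∀ n ≤ m + l, ρ n ∉ G.F i := by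
      intro n hn
      rcases le_or_gt n k with h1 | h1
      · have := hnot n (by omega)
        rwa [removeCycle, if_pos h1] at this
      · rcases le_or_gt n (k + l) with h2 | h2
        · intro hmem
          have hivis : i ∈ visitPrefix G.F ρ (k + l) := ⟨n, h2, hmem⟩
          rw [← hvis] at hivis
          obtain ⟨n', hn', hmem'⟩ := hivis
          have := hnot n' (by omega)
          rw [removeCycle, if_pos hn'] at this
          exact this hmem'
        · have := hnot (n - l) (by omega)
          rw [removeCycle, if_neg (by omega)] at this
          have heq : n - l + l = n := by omega
          rwa [heq] at this
    have h1 := hcons i (m + l) (by rwa [hρ'm] at hown) hnotρ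
    rw [hρ'm]
    refine le_trans (le_of_eq ?_) h1
    congr 1
    funext j
    rw [removeCycle, if_neg (by omega)]
    congr 1
    omega
end

section
/- In a quantitative reachability game, if σ is a Nash equilibrium from v₀, then for every player i and every index k such that ρₖ ∈ V_i and player i has not visited F_i within ρ₀…ρₖ (where ρ is the outcome of σ), it holds that Cost_i(ρ_{≥k}) ≤ Val_i(ρₖ), where Val_i(v) is the value of the two-player zero-sum coalitional game in which player i (minimizer) plays against the coalition of all other players (maximizer) with payoff the number of steps to reach F_i. -/
open scoped Classical

variable {V P : Type}

lemma hist_eq (G : Game P V) (σ : P → Strat V) (v0 : V) (n : ℕ) :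
    (histStep G σ)^[n] ([], v0) =
      ((List.range n).map (outcome G σ v0), outcome G σ v0 n) := by
  induction n with
  | zero => simp [outcome]
  | succ n ih =>
    have h2 : outcome G σ v0 (n + 1) =
        σ (G.owner (outcome G σ v0 n)) ((List.range n).map (outcome G σ v0))
          (outcome G σ v0 n) := by
      rw [outcome, Function.iterate_succ_apply', ih]
      rfl
    rw [Function.iterate_succ_apply', ih, h2]
    simp [histStep, List.range_succ]

lemma cost_le_of_mem {F : Set V} {ρ : ℕ → V} {n : ℕ} (h : ρ n ∈ F) :
    cost F ρ ≤ (n : ℕ∞) :=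
  iInf_le_of_le n (iInf_le _ h)

/-- the outcome of a Nash equilibrium is Val-consistent. -/
theorem stmt5 {V P : Type} [Fintype V] [Fintype P] (G : Game P V) (v0 : V)
    (hdet : ∀ i : P, (∃ s, Positional s ∧ OptimalMin G i s) ∧
      (∃ t, Positional t ∧ OptimalMax G i t))
    (σ : P → Strat V) (hNE : IsNE G σ v0)
    (i : P) (k : ℕ)
    (hown : G.owner (outcome G σ v0 k) = i)
    (hnotvis : ∀ n ≤ k, outcome G σ v0 n ∉ G.F i) :
    cost (G.F i) (fun j => outcome G σ v0 (k + j)) ≤ val G i (outcome G σ v0 k) := by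
  classical
  obtain ⟨⟨sOpt, hpos, hsOptStrat, hsOptVal⟩, -⟩ := hdet i
  set ρ : ℕ → V := outcome G σ v0 with hρ
  -- the deviation strategy of player i
  set s : Strat V := fun p v => if p.length < k then σ i p v else sOpt p v with hs
  have hsStrat : IsStrategy G.toArena s := by
    intro p v
    by_cases h : p.length < k <;> simp only [hs, h, if_true, if_false] <;>
      [exact hNE.1 i p v; exact hsOptStrat p v]
  set σ' : P → Strat V := updProfile σ i s with hσ'
  -- the coalition strategy simulating the other players after history Hk
  set Hk : List V := (List.range k).map ρ with hHk
  set t : Strat V := fun p v => σ (G.owner v) (Hk ++ p) v with ht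
  have htStrat : IsStrategy G.toArena t := fun p v => hNE.1 _ _ v
  set τ : P → Strat V := coalProfile i sOpt t with hτ
  set π : ℕ → V := outcome G τ (ρ k) with hπ
  set δ : ℕ → V := outcome G σ' v0 with hδ
  -- prefix agreement up to step k
  have key : ∀ n ≤ k, (histStep G σ')^[n] ([], v0) = (histStep G σ)^[n] ([], v0) := by
    intro n hn
    induction n with
    | zero => rfl
    | succ n ih =>
      rw [Function.iterate_succ_apply', Function.iterate_succ_apply',
        ih (Nat.le_of_succ_le hn), hist_eq]
      simp only [histStep]
      congr 1
      by_cases h : G.owner (ρ n) = i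
      · rw [h]
        have hnk : n < k := Nat.lt_of_succ_le hn
        simp [hσ', updProfile, hs, hnk]
      · simp [hσ', updProfile, h, show ¬G.owner (outcome G σ v0 n) = i from h]
  -- suffix agreement with the coalitional play
  have suffkey : ∀ j, (histStep G σ')^[k + j] ([], v0) =
      (Hk ++ ((histStep G τ)^[j] ([], ρ k)).1, ((histStep G τ)^[j] ([], ρ k)).2) := by
    intro j
    induction j with
    | zero =>
      rw [Nat.add_zero, key k le_rfl, hist_eq]
      simp
      exact ⟨rfl, rfl⟩
    | succ j ih =>
      rw [← Nat.add_assoc, Function.iterate_succ_apply', ih,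
        Function.iterate_succ_apply', hist_eq]
      simp only [histStep]
      congr 1
      · simp
      · have hlen : ∀ L : List V, ¬ ((Hk ++ L).length < k) := by
          intro L
          simp only [List.length_append, hHk, List.length_map, List.length_range]
          omega
        by_cases h : G.owner (π j) = i
        · rw [h]
          simp only [hσ', updProfile, hτ, coalProfile, hs, if_true, eq_self_iff_true]
          rw [if_neg (hlen _)]
          exact hpos _ _ _
        · have h' : ¬G.owner (outcome G (coalProfile i sOpt fun p v => σ (G.owner v) (Hk ++ p) v) (ρ k) j) = i := h
          simp only [hσ', updProfile, if_neg h, hτ, coalProfile, if_neg h, ht]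
          simp only [if_neg h']
  have hδpre : ∀ n ≤ k, δ n = ρ n := by
    intro n hn
    rw [hδ, outcome, key n hn]
    rfl
  have hδsuff : ∀ j, δ (k + j) = π j := by
    intro j
    rw [hδ, outcome, suffkey j]
    rfl
  -- cost π ≤ val
  have hπval : cost (G.F i) π ≤ val G i (ρ k) := hsOptVal (ρ k) t htStrat
  -- NE inequality
  have hNEineq : cost (G.F i) ρ ≤ cost (G.F i) δ := hNE.2 i s hsStrat
  -- direction A : k + cost suffix ≤ cost ρ
  have hA : (k : ℕ∞) + cost (G.F i) (fun j => ρ (k + j)) ≤ cost (G.F i) ρ := by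
    refine le_iInf fun m => le_iInf fun hm => ?_
    have hkm : k < m := by
      by_contra h
      exact hnotvis m (Nat.le_of_not_lt h) hm
    obtain ⟨j, rfl⟩ : ∃ j, m = k + j := ⟨m - k, by omega⟩
    have h1 : cost (G.F i) (fun j => ρ (k + j)) ≤ (j : ℕ∞) := cost_le_of_mem hm
    calc (k : ℕ∞) + cost (G.F i) (fun j => ρ (k + j)) ≤ (k : ℕ∞) + j :=
          add_le_add_right h1 _
      _ = ((k + j : ℕ) : ℕ∞) := by push_cast; ring
  -- direction B : cost δ ≤ k + cost π
  have hB : cost (G.F i) δ ≤ (k : ℕ∞) + cost (G.F i) π := by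
    by_cases hex : ∃ j, π j ∈ G.F i
    · set j0 := Nat.find hex with hj0
      have hπlb : (j0 : ℕ∞) ≤ cost (G.F i) π := by
        refine le_iInf fun m => le_iInf fun hm => ?_
        exact_mod_cast Nat.find_min' hex hm
      have hδub : cost (G.F i) δ ≤ ((k + j0 : ℕ) : ℕ∞) := by
        refine cost_le_of_mem ?_
        rw [hδsuff j0]
        exact Nat.find_spec hex
      calc cost (G.F i) δ ≤ ((k + j0 : ℕ) : ℕ∞) := hδub
        _ = (k : ℕ∞) + j0 := by push_cast; ring
        _ ≤ (k : ℕ∞) + cost (G.F i) π := add_le_add_right hπlb _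
    · have : cost (G.F i) π = ⊤ := by
        simp only [cost, iInf_eq_top]
        intro j hj
        exact absurd ⟨j, hj⟩ hex
      rw [this]
      simp
  -- combine and cancel k
  have hchain : (k : ℕ∞) + cost (G.F i) (fun j => ρ (k + j)) ≤
      (k : ℕ∞) + val G i (ρ k) :=
    hA.trans (hNEineq.trans (hB.trans (add_le_add_right hπval _)))
  exact (WithTop.add_le_add_iff_left (by exact_mod_cast WithTop.coe_ne_top :
    (k : ℕ∞) ≠ ⊤)).mp hchain
end

section
/- There exists a two-player initialized quantitative reachability game (G, v₀) that has no Nash equilibrium whose cost profile is Pareto optimal among the cost profiles of all plays from v₀. -/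
open scoped Classical

variable {V P : Type}

namespace Stmt8Aux

def nxt : Fin 8 → List (Fin 8)
  | 0 => [1, 4]
  | 1 => [2]
  | 2 => [3]
  | 3 => [0]
  | 4 => [5, 6]
  | 5 => [0]
  | 6 => [7]
  | 7 => [0]

def Flist : Fin 2 → List (Fin 8)
  | 0 => [5, 7]
  | 1 => [3, 7]

def A8 : Arena (Fin 8) := ⟨fun v w => w ∈ nxt v, by decide⟩

def G8 : Game (Fin 2) (Fin 8) :=
  { A8 with
    owner := fun v => if v = 0 then 1 else 0
    F := fun i => {v | v ∈ Flist i} }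

def go : Fin 8 → Fin 8
  | 0 => 1
  | 1 => 2
  | 2 => 3
  | 3 => 0
  | 4 => 5
  | 5 => 0
  | 6 => 7
  | 7 => 0

lemma go_strategy : IsStrategy G8.toArena (fun _ v => go v) :=
  fun _ v => (by decide : ∀ v : Fin 8, go v ∈ nxt v) v

def loopv : ℕ → Fin 8
  | 0 => 0
  | 1 => 4
  | 2 => 6
  | _ => 7

lemma outcome_succ_eq (G : Game P V) (σ : P → Strat V) (v0 : V) (k : ℕ) :
    outcome G σ v0 (k+1) =
      σ (G.owner (outcome G σ v0 k)) (((histStep G σ)^[k] ([], v0)).1)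
        (outcome G σ v0 k) := by
  unfold outcome
  rw [Function.iterate_succ_apply']
  rfl

lemma outcome_isPlay (G : Game P V) (σ : P → Strat V) (v0 : V)
    (h : ∀ i, IsStrategy G.toArena (σ i)) : IsPlay G.toArena (outcome G σ v0) := by
  intro k
  rw [outcome_succ_eq]
  exact h _ _ _

lemma cost_le_of_mem (F : Set V) (ρ : ℕ → V) (k : ℕ) (h : ρ k ∈ F) :
    cost F ρ ≤ (k : ℕ∞) := iInf₂_le k h

lemma le_cost (F : Set V) (ρ : ℕ → V) (n : ℕ) (h : ∀ k < n, ρ k ∉ F) :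
    (n : ℕ∞) ≤ cost F ρ :=
  le_iInf₂ fun k hk => Nat.cast_le.mpr (Nat.le_of_not_lt fun hlt => h k hlt hk)

lemma exists_le_of_cost_le (F : Set V) (ρ : ℕ → V) (n : ℕ)
    (h : cost F ρ ≤ (n : ℕ∞)) : ∃ k ≤ n, ρ k ∈ F := by
  by_contra hc
  push_neg at hc
  have h2 : ((n+1 : ℕ) : ℕ∞) ≤ cost F ρ :=
    le_cost F ρ (n+1) (fun k hk => hc k (Nat.lt_succ_iff.mp hk))
  have h3 := le_trans h2 h
  have h4 : (n+1 : ℕ) ≤ n := Nat.cast_le.mp h3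
  omega

end Stmt8Aux

/-- there is a two-player quantitative reachability game with no
Nash equilibrium whose cost profile is Pareto optimal. -/
theorem stmt8 :
    ∃ (V : Type) (_ : Fintype V) (G : Game (Fin 2) V) (v0 : V),
      ∀ σ : Fin 2 → Strat V, IsNE G σ v0 →
        ¬ ParetoMinimal (costProfiles G v0)
            (fun i => cost (G.F i) (outcome G σ v0)) := by
  classical
  refine ⟨Fin 8, inferInstance, Stmt8Aux.G8, 0, ?_⟩
  intro σ hNE
  obtain ⟨hstrat, hdev⟩ := hNE
  intro hP
  open Stmt8Aux in
  set ρ : ℕ → Fin 8 := outcome G8 σ 0 with hρ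
  have hplay : IsPlay G8.toArena ρ := outcome_isPlay _ _ _ hstrat
  have hv1 : ρ 1 ∈ nxt 0 := hplay 0
  have hv2 : ρ 2 ∈ nxt (ρ 1) := hplay 1
  have hv3 : ρ 3 ∈ nxt (ρ 2) := hplay 2
  -- Player 2 deviation: force visiting v1 at time 3
  set s : Strat (Fin 8) := fun _ v => go v with hsdef
  have hs : IsStrategy G8.toArena s := go_strategy
  set τ2 : Fin 2 → Strat (Fin 8) := updProfile σ 1 s with hτ2
  have e1 : τ2 1 = s := if_pos rfl
  have e0 : τ2 0 = σ 0 := if_neg (by decide)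
  have h1 : outcome G8 τ2 0 1 = 1 := by
    rw [outcome_succ_eq]
    show τ2 1 [] 0 = 1
    rw [e1, hsdef]
    decide
  have h2 : outcome G8 τ2 0 2 = 2 := by
    rw [outcome_succ_eq, h1]
    show τ2 0 _ 1 = 2
    rw [e0]
    exact (by decide : ∀ w : Fin 8, w ∈ nxt 1 → w = 2) _ (hstrat 0 _ 1)
  have h3 : outcome G8 τ2 0 3 = 3 := by
    rw [outcome_succ_eq, h2]
    show τ2 0 _ 2 = 3
    rw [e0]
    exact (by decide : ∀ w : Fin 8, w ∈ nxt 2 → w = 3) _ (hstrat 0 _ 2)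
  have hc2' : cost (G8.F 1) (outcome G8 τ2 0) ≤ ((3 : ℕ) : ℕ∞) :=
    cost_le_of_mem _ _ 3 (by rw [h3]; exact (by decide : (3 : Fin 8) ∈ Flist 1))
  have hc2 : cost (G8.F 1) ρ ≤ ((3 : ℕ) : ℕ∞) := (hdev 1 s hs).trans hc2'
  obtain ⟨k, hk3, hkF⟩ := exists_le_of_cost_le _ _ 3 hc2
  have hρ3 : ρ 3 = 3 ∨ ρ 3 = 7 := by
    interval_cases k
    · exact absurd hkF (by decide : ¬ (0 : Fin 8) ∈ Flist 1)
    · exact absurd hkF ((by decide : ∀ v : Fin 8, v ∈ nxt 0 → v ∉ Flist 1) _ hv1)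
    · exact absurd hkF
        ((by decide : ∀ a b : Fin 8, a ∈ nxt 0 → b ∈ nxt a → b ∉ Flist 1) _ _ hv1 hv2)
    · exact (by decide : ∀ v : Fin 8, v ∈ Flist 1 → v = 3 ∨ v = 7) _ hkF
  rcases hρ3 with hcase | hcase
  · -- ρ goes through v1 at time 3; then (3,3) strictly dominates
    have h22 : ρ 2 = 2 :=
      (by decide : ∀ a b : Fin 8, b ∈ nxt a → b = 3 → a = 2) _ _ hv3 hcase
    have h11 : ρ 1 = 1 :=
      (by decide : ∀ a b : Fin 8, b ∈ nxt a → b = 2 → a = 1) _ _ hv2 h22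
    have h4le : ((4 : ℕ) : ℕ∞) ≤ cost (G8.F 0) ρ := by
      apply le_cost
      intro k hk
      interval_cases k
      · exact (by decide : ¬ (0 : Fin 8) ∈ Flist 0)
      · rw [h11]; exact (by decide : ¬ (1 : Fin 8) ∈ Flist 0)
      · rw [h22]; exact (by decide : ¬ (2 : Fin 8) ∈ Flist 0)
      · rw [hcase]; exact (by decide : ¬ (3 : Fin 8) ∈ Flist 0)
    have h3le : ((3 : ℕ) : ℕ∞) ≤ cost (G8.F 1) ρ := by
      apply le_cost
      intro k hk
      interval_cases k
      · exact (by decide : ¬ (0 : Fin 8) ∈ Flist 1)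
      · rw [h11]; exact (by decide : ¬ (1 : Fin 8) ∈ Flist 1)
      · rw [h22]; exact (by decide : ¬ (2 : Fin 8) ∈ Flist 1)
    -- the dominating play: loop v0 v2 z v4
    set π : ℕ → Fin 8 := fun k => loopv (k % 4) with hπ
    have hπplay : IsPlay G8.toArena π := by
      intro k
      have hm : k % 4 = 0 ∨ k % 4 = 1 ∨ k % 4 = 2 ∨ k % 4 = 3 := by omega
      have hsucc : (k+1) % 4 = (k % 4 + 1) % 4 := by omega
      show loopv ((k+1) % 4) ∈ nxt (loopv (k % 4))
      rcases hm with h | h | h | h <;> rw [hsucc, h] <;> decide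
    have hπmem : (fun i => cost (G8.F i) π) ∈ costProfiles G8 0 :=
      ⟨π, hπplay, rfl, rfl⟩
    have hπ0le : cost (G8.F 0) π ≤ ((3 : ℕ) : ℕ∞) :=
      cost_le_of_mem _ _ 3 (by exact (by decide : (7 : Fin 8) ∈ Flist 0))
    have hπ1le : cost (G8.F 1) π ≤ ((3 : ℕ) : ℕ∞) :=
      cost_le_of_mem _ _ 3 (by exact (by decide : (7 : Fin 8) ∈ Flist 1))
    have hle : (fun i => cost (G8.F i) π) ≤ (fun i => cost (G8.F i) ρ) := by
      intro i
      fin_cases i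
      · exact hπ0le.trans ((Nat.cast_le.mpr (by norm_num)).trans h4le)
      · exact hπ1le.trans h3le
    have heq := hP.2 _ hπmem hle
    have heq0 : cost (G8.F 0) π = cost (G8.F 0) ρ := congrFun heq 0
    have : ((4 : ℕ) : ℕ∞) ≤ ((3 : ℕ) : ℕ∞) := by
      calc ((4 : ℕ) : ℕ∞) ≤ cost (G8.F 0) ρ := h4le
        _ = cost (G8.F 0) π := heq0.symm
        _ ≤ ((3 : ℕ) : ℕ∞) := hπ0le
    exact absurd (Nat.cast_le.mp this) (by norm_num)
  · -- ρ goes through v4 at time 3; Player 1 deviates to v3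
    have h26 : ρ 2 = 6 :=
      (by decide : ∀ a b : Fin 8, b ∈ nxt a → b = 7 → a = 6) _ _ hv3 hcase
    have h14 : ρ 1 = 4 :=
      (by decide : ∀ a b : Fin 8, b ∈ nxt a → b = 6 → a = 4) _ _ hv2 h26
    set τ1 : Fin 2 → Strat (Fin 8) := updProfile σ 0 s with hτ1
    have e1' : τ1 0 = s := if_pos rfl
    have e0' : τ1 1 = σ 1 := if_neg (by decide)
    have k1 : outcome G8 τ1 0 1 = 4 := by
      have e : outcome G8 τ1 0 1 = ρ 1 := by
        rw [hρ, outcome_succ_eq, outcome_succ_eq]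
        show τ1 1 [] 0 = σ 1 [] 0
        rw [e0']
      rw [e, h14]
    have k2 : outcome G8 τ1 0 2 = 5 := by
      rw [outcome_succ_eq, k1]
      show τ1 0 _ 4 = 5
      rw [e1', hsdef]
      exact rfl
    have hc1' : cost (G8.F 0) (outcome G8 τ1 0) ≤ ((2 : ℕ) : ℕ∞) :=
      cost_le_of_mem _ _ 2 (by rw [k2]; exact (by decide : (5 : Fin 8) ∈ Flist 0))
    have hc1 : cost (G8.F 0) ρ ≤ ((2 : ℕ) : ℕ∞) := (hdev 0 s hs).trans hc1'
    obtain ⟨k, hk2, hkF0⟩ := exists_le_of_cost_le _ _ 2 hc1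
    interval_cases k
    · exact absurd hkF0 (by decide : ¬ (0 : Fin 8) ∈ Flist 0)
    · rw [h14] at hkF0
      exact absurd hkF0 (by decide : ¬ (4 : Fin 8) ∈ Flist 0)
    · rw [h26] at hkF0
      exact absurd hkF0 (by decide : ¬ (6 : Fin 8) ∈ Flist 0)
end

section
/- Let (G, v₀) be an initialized quantitative reachability game and let G' be the qualitative reachability game on the same arena with the same target sets (Gain_i(ρ) = 1 if ρ visits F_i, else 0, and players maximize gains). If σ is a Nash equilibrium in (G, v₀) (for the cost/minimization semantics), then σ is a Nash equilibrium in (G', v₀) (for the gain/maximization semantics). -/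
open scoped Classical

variable {V P : Type}

lemma cost_lt_top_iff {V : Type} (F : Set V) (ρ : ℕ → V) :
    cost F ρ < ⊤ ↔ ∃ n, ρ n ∈ F := by
  constructor
  · intro hlt
    by_contra hn
    push_neg at hn
    have : cost F ρ = ⊤ := by
      simp [cost, iInf_eq_top]
      intro k hk; exact absurd hk (hn k)
    simp [this] at hlt
  · rintro ⟨n, hn⟩
    calc cost F ρ ≤ (n : ℕ∞) := by
          exact iInf_le_of_le n (by simp [hn])
      _ < ⊤ := by simp

/-- a Nash equilibrium of the quantitative game is a Nash
equilibrium of the qualitative game on the same arena and target sets. -/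
theorem stmt10 {V P : Type} (G : Game P V) (v0 : V) (σ : P → Strat V)
    (h : IsNE G σ v0) : IsNEqual G σ v0 := by
  obtain ⟨hstr, hne⟩ := h
  refine ⟨hstr, fun i s hs => ?_⟩
  have hc := hne i s hs
  unfold gain
  split_ifs with h1 h2 h2
  · rfl
  · exfalso
    apply h2
    rw [← cost_lt_top_iff]
    exact lt_of_le_of_lt hc ((cost_lt_top_iff _ _).2 h1)
  · exact Nat.zero_le _
  · rfl
end

section
/- In a quantitative reachability game, for every play ρ there is a lasso ρ' = hℓ^ω of length at most (|Π|+1)·|V| such that Visit(ρ') = Visit(ρ), obtained by iteratively removing unnecessary cycles and then winding into a lasso; moreover if ρ is λ-consistent for a labeling λ, then ρ' is λ-consistent. -/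
open scoped Classical

variable {V P : Type}

section Aux

lemma cost_le_nat {F : Set V} {ρ : ℕ → V} {k : ℕ} (h : ρ k ∈ F) : cost F ρ ≤ (k : ℕ∞) :=
  iInf₂_le k h

lemma cost_eq_top {F : Set V} {ρ : ℕ → V} (h : ∀ k, ρ k ∉ F) : cost F ρ = ⊤ := by
  simp [cost, h]

lemma cost_le_cost {F : Set V} {σ ρ : ℕ → V}
    (h : ∀ n, ρ n ∈ F → ∃ m ≤ n, σ m ∈ F) : cost F σ ≤ cost F ρ := by
  refine le_iInf₂ fun n hn => ?_
  obtain ⟨m, hmn, hm⟩ := h n hn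
  exact (cost_le_nat hm).trans (Nat.cast_le.2 hmn)

lemma visitPrefix_mono (F : P → Set V) (ρ : ℕ → V) {j k : ℕ} (h : j ≤ k) :
    visitPrefix F ρ j ⊆ visitPrefix F ρ k := by
  rintro i ⟨n, hn, hni⟩
  exact ⟨n, hn.trans h, hni⟩

/-- Cycle removal: given a play and a horizon `M` by which all visits happened,
produce a play with the same start, same visit set, a horizon `M'` witnessing all
visits, no unnecessary cycle within `[0, M']`, preserving `λ`-consistency. -/
lemma removeCycles [Fintype P] (G : Game P V) :
    ∀ (M : ℕ) (ρ : ℕ → V), IsPlay G.toArena ρ → visitPrefix G.F ρ M = visit G.F ρ →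
      ∃ (σ : ℕ → V) (M' : ℕ), IsPlay G.toArena σ ∧ σ 0 = ρ 0 ∧
        visitPrefix G.F σ M' = visit G.F σ ∧ visit G.F σ = visit G.F ρ ∧
        (∀ a b, a < b → b ≤ M' → σ a = σ b →
          visitPrefix G.F σ a ≠ visitPrefix G.F σ b) ∧
        (∀ lam, lambdaConsistent G lam ρ → lambdaConsistent G lam σ) := by
  intro M
  induction M using Nat.strong_induction_on with
  | _ M IH =>
  intro ρ hρ hM
  by_cases hcyc : ∃ a b, a < b ∧ b ≤ M ∧ ρ a = ρ b ∧
      visitPrefix G.F ρ a = visitPrefix G.F ρ b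
  · obtain ⟨a, b, hab, hbM, hval, hvp⟩ := hcyc
    set l := b - a with hl_def
    have hl : 0 < l := by omega
    have hbal : b = a + l := by omega
    set σ₁ : ℕ → V := fun j => if j ≤ a then ρ j else ρ (j + l) with hσ₁
    have e1 : ∀ j, j ≤ a → σ₁ j = ρ j := fun j hj => if_pos hj
    have e2 : ∀ j, a ≤ j → σ₁ j = ρ (j + l) := by
      intro j hj
      rcases eq_or_lt_of_le hj with h | hj'
      · subst h
        rw [e1 a le_rfl, ← hbal]
        exact hval
      · exact if_neg (by omega)
    have hplay₁ : IsPlay G.toArena σ₁ := by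
      intro k
      rcases lt_or_ge k a with hk | hk
      · rw [e1 k (by omega), e1 (k+1) (by omega)]; exact hρ k
      · rw [e2 k hk, e2 (k+1) (by omega), show k + 1 + l = (k + l) + 1 by omega]
        exact hρ (k + l)
    have hvp' : ∀ k, a ≤ k → visitPrefix G.F σ₁ k = visitPrefix G.F ρ (k + l) := by
      intro k hk
      ext i
      constructor
      · rintro ⟨n, hn, hni⟩
        rcases le_or_gt n a with hna | hna
        · exact ⟨n, by omega, by rwa [e1 n hna] at hni⟩
        · exact ⟨n + l, by omega, by rwa [e2 n hna.le] at hni⟩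
      · rintro ⟨n, hn, hni⟩
        rcases le_or_gt n a with hna | hna
        · exact ⟨n, by omega, by rwa [e1 n hna]⟩
        rcases le_or_gt n b with hnb | hnb
        · have : i ∈ visitPrefix G.F ρ a := hvp ▸ ⟨n, hnb, hni⟩
          obtain ⟨u, hu, hui⟩ := this
          exact ⟨u, by omega, by rwa [e1 u hu]⟩
        · refine ⟨n - l, by omega, ?_⟩
          rw [e2 (n - l) (by omega), show n - l + l = n by omega]
          exact hni
    have hvisit₁ : visit G.F σ₁ = visit G.F ρ := by
      ext i
      constructor
      · rintro ⟨n, hni⟩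
        rcases le_or_gt n a with hna | hna
        · exact ⟨n, by rwa [e1 n hna] at hni⟩
        · exact ⟨n + l, by rwa [e2 n hna.le] at hni⟩
      · rintro ⟨n, hni⟩
        rcases le_or_gt n a with hna | hna
        · exact ⟨n, by rwa [e1 n hna]⟩
        · have : i ∈ visitPrefix G.F ρ (n + l) := ⟨n, by omega, hni⟩
          rw [← hvp' n hna.le] at this
          obtain ⟨m, _, hm⟩ := this
          exact ⟨m, hm⟩
    have hM₁ : visitPrefix G.F σ₁ (M - l) = visit G.F σ₁ := by
      rw [hvp' (M - l) (by omega), show M - l + l = M by omega, hM, hvisit₁]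
    have hcons₁ : ∀ lam, lambdaConsistent G lam ρ → lambdaConsistent G lam σ₁ := by
      intro lam h i k hown hnot
      rcases le_or_gt k a with hk | hk
      · have hnot' : ∀ n ≤ k, ρ n ∉ G.F i := by
          intro n hn
          rw [← e1 n (by omega)]; exact hnot n hn
        have hc := h i k (by rwa [e1 k hk] at hown) hnot'
        rw [e1 k hk]
        refine le_trans (cost_le_cost ?_) hc
        intro n hn
        rcases le_or_gt (k + n) a with hkn | hkn
        · exact ⟨n, le_rfl, by rwa [e1 (k + n) hkn]⟩
        rcases le_or_gt (k + n) b with hknb | hknb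
        · have : i ∈ visitPrefix G.F ρ a := hvp ▸ ⟨k + n, hknb, hn⟩
          obtain ⟨u, hu, hui⟩ := this
          have hku : k < u := by
            by_contra hcon
            exact hnot u (by omega) (by rwa [e1 u hu])
          refine ⟨u - k, by omega, ?_⟩
          rw [show k + (u - k) = u by omega, e1 u hu]; exact hui
        · refine ⟨n - l, by omega, ?_⟩
          rw [show k + (n - l) = k + n - l by omega, e2 (k + n - l) (by omega),
            show k + n - l + l = k + n by omega]
          exact hn
      · have hnot' : ∀ n ≤ k + l, ρ n ∉ G.F i := by
          intro n hn hni
          rcases le_or_gt n a with hna | hna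
          · exact hnot n (by omega) (by rwa [e1 n hna])
          rcases le_or_gt n b with hnb | hnb
          · have : i ∈ visitPrefix G.F ρ a := hvp ▸ ⟨n, hnb, hni⟩
            obtain ⟨u, hu, hui⟩ := this
            exact hnot u (by omega) (by rwa [e1 u hu])
          · exact hnot (n - l) (by omega)
              (by rwa [e2 (n - l) (by omega), show n - l + l = n by omega])
        have hc := h i (k + l) (by rwa [e2 k hk.le] at hown) hnot'
        rw [e2 k hk.le]
        have heq : (fun j => σ₁ (k + j)) = fun j => ρ (k + l + j) := by
          funext j
          rw [e2 (k + j) (by omega), show k + j + l = k + l + j by omega]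
        rw [heq]
        exact hc
    obtain ⟨σ, M', h1, h2, h3, h4, h5, h6⟩ :=
      IH (M - l) (by omega) σ₁ hplay₁ hM₁
    exact ⟨σ, M', h1, by rw [h2, e1 0 (by omega)], h3, by rw [h4, hvisit₁], h5,
      fun lam hlam => h6 lam (hcons₁ lam hlam)⟩
  · push_neg at hcyc
    exact ⟨ρ, M, hρ, rfl, hM, rfl,
      fun a b h1 h2 h3 => hcyc a b h1 h2 h3, fun lam h => h⟩

end Aux

/-- every play can be turned into a lasso of length at most
`(|Π|+1)·|V|` with the same set of visiting players, preserving
`λ`-consistency. -/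
theorem stmt11 {V P : Type} [Fintype V] [Fintype P] (G : Game P V) (ρ : ℕ → V)
    (hρ : IsPlay G.toArena ρ) :
    ∃ ρ' : ℕ → V, IsPlay G.toArena ρ' ∧ ρ' 0 = ρ 0 ∧
      IsLasso ρ' ((Fintype.card P + 1) * Fintype.card V) ∧
      visit G.F ρ' = visit G.F ρ ∧
      ∀ lam : V → ℕ∞, lambdaConsistent G lam ρ → lambdaConsistent G lam ρ' := by
  classical
  -- a horizon by which every visited target has been visited
  obtain ⟨M, hM⟩ : ∃ M, visitPrefix G.F ρ M = visit G.F ρ := by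
    set f : P → ℕ := fun i => if h : ∃ n, ρ n ∈ G.F i then h.choose else 0 with hf
    refine ⟨Finset.univ.sup f, ?_⟩
    apply Set.Subset.antisymm
    · rintro i ⟨n, _, hn⟩; exact ⟨n, hn⟩
    · rintro i hi
      obtain ⟨n, hn⟩ := hi
      have hex : ∃ n, ρ n ∈ G.F i := ⟨n, hn⟩
      refine ⟨f i, Finset.le_sup (Finset.mem_univ i), ?_⟩
      simp only [hf, dif_pos hex]
      exact hex.choose_spec
  obtain ⟨σ, M', hσplay, hσ0, hσM', hσvisit, hσnc, hσcons⟩ :=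
    removeCycles G M ρ hρ hM
  set N := (Fintype.card P + 1) * Fintype.card V with hN
  -- pigeonhole: two positions `a < b ≤ N` with the same vertex and visit prefix
  have key : ∃ a b, a < b ∧ b ≤ N ∧ σ a = σ b ∧
      visitPrefix G.F σ a = visitPrefix G.F σ b := by
    have hVpos : 0 < Fintype.card V := Fintype.card_pos_iff.2 ⟨ρ 0⟩
    set g : Fin (N + 1) → V × Fin (Fintype.card P + 1) := fun j =>
      (σ j.1, ⟨(visitPrefix G.F σ j.1).ncard, by
        have h1 : (visitPrefix G.F σ j.1).ncard ≤ (Set.univ : Set P).ncard :=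
          Set.ncard_le_ncard (Set.subset_univ _) (Set.toFinite _)
        have h2 : (Set.univ : Set P).ncard = Fintype.card P := by
          rw [Set.ncard_univ, Nat.card_eq_fintype_card]
        omega⟩) with hg
    have hcard : Fintype.card (V × Fin (Fintype.card P + 1)) < Fintype.card (Fin (N + 1)) := by
      simp [hN, mul_comm]
    obtain ⟨x, y, hxy, hgxy⟩ := Fintype.exists_ne_map_eq_of_card_lt g hcard
    have hmain : ∀ (x y : Fin (N + 1)), x.1 < y.1 → g x = g y →
        ∃ a b, a < b ∧ b ≤ N ∧ σ a = σ b ∧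
          visitPrefix G.F σ a = visitPrefix G.F σ b := by
      intro x y hlt hgeq
      have hv : σ x.1 = σ y.1 := congrArg Prod.fst hgeq
      have hn : (visitPrefix G.F σ x.1).ncard = (visitPrefix G.F σ y.1).ncard := by
        have h2 := congrArg (fun z : V × Fin (Fintype.card P + 1) => (z.2 : ℕ)) hgeq
        simpa [hg] using h2
      have hsub : visitPrefix G.F σ x.1 ⊆ visitPrefix G.F σ y.1 :=
        visitPrefix_mono _ _ hlt.le
      have heq : visitPrefix G.F σ x.1 = visitPrefix G.F σ y.1 :=
        Set.eq_of_subset_of_ncard_le hsub (le_of_eq hn.symm) (Set.toFinite _)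
      exact ⟨x.1, y.1, hlt, by omega, hv, heq⟩
    rcases lt_trichotomy x.1 y.1 with h | h | h
    · exact hmain x y h hgxy
    · exact absurd (Fin.val_injective h) hxy
    · exact hmain y x h hgxy.symm
  obtain ⟨a, b, hab, hbN, hval, hvp⟩ := key
  -- `b` must lie beyond `M'`, hence everything is visited by time `a`
  have hbM' : M' < b := by
    by_contra hcon
    exact hσnc a b hab (by omega) hval hvp
  have hvpa : visitPrefix G.F σ a = visit G.F σ := by
    apply Set.Subset.antisymm
    · rintro i ⟨n, _, hn⟩; exact ⟨n, hn⟩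
    · intro i hi
      rw [hvp]
      exact visitPrefix_mono _ _ (by omega) (hσM' ▸ hi)
  set p := b - a with hp_def
  have hp : 0 < p := by omega
  set ρ' : ℕ → V := fun k => if k < a then σ k else σ (a + (k - a) % p) with hρ'
  have hge : ∀ k, a ≤ k → ρ' k = σ (a + (k - a) % p) := fun k hk => if_neg (by omega)
  have hlt : ∀ k, k < b → ρ' k = σ k := by
    intro k hk
    rcases lt_or_ge k a with h | h
    · exact if_pos h
    · rw [hge k h, Nat.mod_eq_of_lt (by omega), show a + (k - a) = k by omega]
  have hσab : σ (a + p) = σ a := by rw [show a + p = b by omega]; exact hval.symm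
  have hrange : ∀ k, ∃ j, j < b ∧ a ≤ j ∨ j = k ∧ k < b → True := fun k => ⟨0, by tauto⟩
  have hrange' : ∀ k, ∃ j, j < b ∧ ρ' k = σ j := by
    intro k
    rcases lt_or_ge k a with h | h
    · exact ⟨k, by omega, if_pos h⟩
    · exact ⟨a + (k - a) % p, by have := Nat.mod_lt (k - a) hp; omega, hge k h⟩
  have hplay' : IsPlay G.toArena ρ' := by
    intro k
    rcases lt_or_ge k a with hk | hk
    · rw [hlt k (by omega), hlt (k + 1) (by omega)]
      exact hσplay k
    · rw [hge k hk, hge (k + 1) (by omega)]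
      have hmod : (k + 1 - a) % p = ((k - a) % p + 1) % p := by
        rw [show k + 1 - a = (k - a) + 1 by omega]
        exact (((Nat.mod_modEq (k - a) p).add_right 1)).symm
      rw [hmod]
      set r := (k - a) % p with hr_def
      have hr : r < p := Nat.mod_lt _ hp
      rcases lt_or_ge (r + 1) p with h1 | h1
      · rw [Nat.mod_eq_of_lt h1, show a + (r + 1) = a + r + 1 by omega]
        exact hσplay (a + r)
      · have : r + 1 = p := by omega
        rw [this, Nat.mod_self, Nat.add_zero, ← hσab,
          show a + p = a + r + 1 by omega]
        exact hσplay (a + r)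
  refine ⟨ρ', hplay', ?_, ⟨a, p, hp, by omega, ?_⟩, ?_, ?_⟩
  · rw [hlt 0 (by omega), hσ0]
  · -- periodicity
    intro k hk
    rw [hge (k + p) (by omega), hge k hk, show k + p - a = (k - a) + p by omega,
      Nat.add_mod_right]
  · -- same visit set
    rw [← hσvisit]
    apply Set.Subset.antisymm
    · rintro i ⟨n, hn⟩
      obtain ⟨j, _, hj⟩ := hrange' n
      exact ⟨j, hj ▸ hn⟩
    · intro i hi
      rw [← hvpa] at hi
      obtain ⟨n, hn, hni⟩ := hi
      exact ⟨n, by rwa [hlt n (by omega)]⟩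
  · -- λ-consistency
    intro lam hlam i k hown hnot
    have hσc := hσcons lam hlam
    rcases lt_or_ge k a with hk | hk
    · have hnot' : ∀ n ≤ k, σ n ∉ G.F i := by
        intro n hn
        rw [← hlt n (by omega)]
        exact hnot n hn
      have hc := hσc i k (by rwa [hlt k (by omega)] at hown) hnot'
      rw [hlt k (by omega)]
      refine le_trans (cost_le_cost ?_) hc
      intro n hn
      rcases lt_or_ge (k + n) b with h1 | h1
      · exact ⟨n, le_rfl, by rwa [hlt (k + n) h1]⟩
      · have : i ∈ visitPrefix G.F σ a := hvpa ▸ ⟨k + n, hn⟩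
        obtain ⟨u, hu, hui⟩ := this
        have hku : k < u := by
          by_contra hcon
          exact hnot' u (by omega) hui
        refine ⟨u - k, by omega, ?_⟩
        rw [show k + (u - k) = u by omega, hlt u (by omega)]
        exact hui
    · -- beyond `a`: player `i` is never visited, so `lam` is `⊤` there
      have hnv : i ∉ visit G.F σ := by
        rw [← hvpa]
        rintro ⟨u, hu, hui⟩
        exact hnot u (by omega) (by rwa [hlt u (by omega)])
      obtain ⟨j, hjb, hej⟩ := hrange' k
      have hc := hσc i j (by rwa [hej] at hown)
        (fun n _ hn => hnv ⟨n, hn⟩)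
      have htop : cost (G.F i) (fun m => σ (j + m)) = ⊤ :=
        cost_eq_top (fun m hm => hnv ⟨j + m, hm⟩)
      rw [htop, top_le_iff] at hc
      rw [hej, hc]
      exact le_top
end

section
/- There exists a three-player initialized qualitative reachability game that has no Nash equilibrium whose gain profile is Pareto optimal among gain profiles of plays from the initial vertex. -/
open scoped Classical

variable {V P : Type}

namespace Stmt16Aux

def nxt : Fin 7 → List (Fin 7)
  | 0 => [1, 2]
  | 1 => [3, 4]
  | 2 => [5, 6]
  | 3 => [3]
  | 4 => [4]
  | 5 => [5]
  | 6 => [6]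

def myA : Arena (Fin 7) where
  E v w := w ∈ nxt v
  succ v := by fin_cases v <;> exact ⟨_, List.mem_cons_self⟩

def myOwner : Fin 7 → Fin 3
  | 0 => 0
  | 1 => 1
  | 2 => 2
  | _ => 0

def myF : Fin 3 → Set (Fin 7)
  | 0 => fun v => v = 4 ∨ v = 5
  | 1 => fun v => v = 3 ∨ v = 5
  | 2 => fun v => v = 4 ∨ v = 6

def myG : Game (Fin 3) (Fin 7) where
  toArena := myA
  owner := myOwner
  F := myF

/-- deviation for player 1: from vertex 1 go to 3 -/
def dev1 : Fin 7 → Fin 7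
  | 0 => 1 | 1 => 3 | 2 => 5 | 3 => 3 | 4 => 4 | 5 => 5 | 6 => 6

/-- deviation for player 2: from vertex 2 go to 6 -/
def dev2 : Fin 7 → Fin 7
  | 0 => 1 | 1 => 3 | 2 => 6 | 3 => 3 | 4 => 4 | 5 => 5 | 6 => 6

lemma dev1_strat : IsStrategy myG.toArena (fun _ v => dev1 v) := by
  intro p v
  show dev1 v ∈ nxt v
  fin_cases v <;> decide

lemma dev2_strat : IsStrategy myG.toArena (fun _ v => dev2 v) := by
  intro p v
  show dev2 v ∈ nxt v
  fin_cases v <;> decide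

lemma outcome_zero (G : Game P V) (σ : P → Strat V) (v0 : V) :
    outcome G σ v0 0 = v0 := rfl

lemma outcome_one (G : Game P V) (σ : P → Strat V) (v0 : V) :
    outcome G σ v0 1 = σ (G.owner v0) [] v0 := rfl

lemma outcome_two (G : Game P V) (σ : P → Strat V) (v0 : V) :
    outcome G σ v0 2 =
      σ (G.owner (outcome G σ v0 1)) [v0] (outcome G σ v0 1) := rfl

lemma outcome_isPlay (G : Game P V) (σ : P → Strat V)
    (hσ : ∀ i, IsStrategy G.toArena (σ i)) (v0 : V) :
    IsPlay G.toArena (outcome G σ v0) := by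
  intro k
  have h : outcome G σ v0 (k + 1) =
      (histStep G σ ((histStep G σ)^[k] ([], v0))).2 := by
    simp [outcome, Function.iterate_succ_apply']
  rw [h]
  exact hσ _ _ _

/-- absorbing lemma -/
lemma play_absorb (ρ : ℕ → Fin 7) (hρ : IsPlay myG.toArena ρ)
    (a : Fin 7) (ha : nxt a = [a]) (m : ℕ) (h : ρ m = a) :
    ∀ k, m ≤ k → ρ k = a := by
  intro k hk
  obtain ⟨d, rfl⟩ := Nat.exists_eq_add_of_le hk
  clear hk
  induction d with
  | zero => simpa using h
  | succ n ih =>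
    have hE : ρ (m + n + 1) ∈ nxt (ρ (m + n)) := hρ (m + n)
    rw [ih, ha] at hE
    exact List.mem_singleton.mp hE

lemma gain_eq_one (F : Set V) (ρ : ℕ → V) (n : ℕ) (h : ρ n ∈ F) :
    gain F ρ = 1 := if_pos ⟨n, h⟩

lemma gain_eq_zero (F : Set V) (ρ : ℕ → V) (h : ∀ n, ρ n ∉ F) :
    gain F ρ = 0 := if_neg (by rintro ⟨n, hn⟩; exact h n hn)

lemma vals (ρ : ℕ → Fin 7) (a b c : Fin 7) (h0 : ρ 0 = a) (h1 : ρ 1 = b)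
    (habs : ∀ k, 2 ≤ k → ρ k = c) :
    ∀ n, ρ n = a ∨ ρ n = b ∨ ρ n = c := by
  intro n
  match n with
  | 0 => exact Or.inl h0
  | 1 => exact Or.inr (Or.inl h1)
  | n + 2 => exact Or.inr (Or.inr (habs (n + 2) (by omega)))

lemma upd_strat (σ : Fin 3 → Strat (Fin 7))
    (hσ : ∀ i, IsStrategy myG.toArena (σ i)) (i : Fin 3) (s : Strat (Fin 7))
    (hs : IsStrategy myG.toArena s) :
    ∀ j, IsStrategy myG.toArena (updProfile σ i s j) := by
  intro j
  unfold updProfile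
  split
  · exact hs
  · exact hσ j

lemma not_paretoMax {α : Type} [Preorder α] (S : Set α) (p q : α)
    (hq : q ∈ S) (hle : p ≤ q) (hne : q ≠ p) : ¬ ParetoMaximal S p :=
  fun h => hne (h.2 q hq hle)

/-- witness play 0, 2, 5, 5, … -/
def play245 : ℕ → Fin 7
  | 0 => 0
  | 1 => 2
  | _ + 2 => 5

/-- witness play 0, 1, 4, 4, … -/
def play134 : ℕ → Fin 7
  | 0 => 0
  | 1 => 1
  | _ + 2 => 4

lemma play245_isPlay : IsPlay myG.toArena play245 := by
  intro k
  match k with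
  | 0 => exact (by decide : (2 : Fin 7) ∈ nxt 0)
  | 1 => exact (by decide : (5 : Fin 7) ∈ nxt 2)
  | n + 2 => exact (by decide : (5 : Fin 7) ∈ nxt 5)

lemma play134_isPlay : IsPlay myG.toArena play134 := by
  intro k
  match k with
  | 0 => exact (by decide : (1 : Fin 7) ∈ nxt 0)
  | 1 => exact (by decide : (4 : Fin 7) ∈ nxt 1)
  | n + 2 => exact (by decide : (4 : Fin 7) ∈ nxt 4)

lemma play245_vals : ∀ n, play245 n = 0 ∨ play245 n = 2 ∨ play245 n = 5 := by
  intro n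
  match n with
  | 0 => exact Or.inl rfl
  | 1 => exact Or.inr (Or.inl rfl)
  | n + 2 => exact Or.inr (Or.inr rfl)

lemma play134_vals : ∀ n, play134 n = 0 ∨ play134 n = 1 ∨ play134 n = 4 := by
  intro n
  match n with
  | 0 => exact Or.inl rfl
  | 1 => exact Or.inr (Or.inl rfl)
  | n + 2 => exact Or.inr (Or.inr rfl)

end Stmt16Aux

open Stmt16Aux

/-- there is a three-player qualitative reachability game with
no Nash equilibrium whose gain profile is Pareto optimal. -/
theorem stmt16 :
    ∃ (V : Type) (_ : Fintype V) (G : Game (Fin 3) V) (v0 : V),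
      ∀ σ : Fin 3 → Strat V, IsNEqual G σ v0 →
        ¬ ParetoMaximal (gainProfiles G v0)
            (fun i => gain (G.F i) (outcome G σ v0)) := by
  classical
  refine ⟨Fin 7, inferInstance, myG, 0, ?_⟩
  intro σ hNE
  obtain ⟨hstrat, hdev⟩ := hNE
  set ρ := outcome myG σ (0 : Fin 7) with hρdef
  have hplay : IsPlay myG.toArena ρ := outcome_isPlay _ _ hstrat _
  have h0 : ρ 0 = 0 := rfl
  have h1 : ρ 1 = 1 ∨ ρ 1 = 2 := by
    have e : ρ 1 ∈ nxt (ρ 0) := hplay 0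
    rw [h0] at e
    have e2 : ρ 1 ∈ [(1 : Fin 7), 2] := e
    simpa using e2
  rcases h1 with h1 | h1
  · -- ρ 1 = 1
    have h2 : ρ 2 = 3 ∨ ρ 2 = 4 := by
      have e : ρ 2 ∈ nxt (ρ 1) := hplay 1
      rw [h1] at e
      have e2 : ρ 2 ∈ [(3 : Fin 7), 4] := e
      simpa using e2
    rcases h2 with h2 | h2
    · -- outcome 0,1,3,3,… : gain profile (0,1,0), dominated by play245
      have habs : ∀ k, 2 ≤ k → ρ k = 3 := play_absorb ρ hplay 3 rfl 2 h2
      have hvals := vals ρ 0 1 3 h0 h1 habs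
      have p0 : gain (myG.F 0) ρ = 0 := by
        refine gain_eq_zero _ _ ?_
        intro n hn
        rcases hvals n with h | h | h <;> rw [h] at hn <;>
          exact hn.elim (by decide) (by decide)
      refine not_paretoMax _ _ (fun i => gain (myG.F i) play245)
        ⟨play245, play245_isPlay, rfl, rfl⟩ ?_ ?_
      · intro i
        fin_cases i
        · exact p0.trans_le (Nat.zero_le _)
        · have hq : gain (myG.F 1) play245 = 1 :=
            gain_eq_one _ _ 2 (Or.inr rfl)
          have hp : gain (myG.F 1) ρ = 1 := gain_eq_one _ _ 2 (h2 ▸ Or.inl rfl)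
          exact hp.trans_le hq.ge
        · have hp : gain (myG.F 2) ρ = 0 := by
            refine gain_eq_zero _ _ ?_
            intro n hn
            rcases hvals n with h | h | h <;> rw [h] at hn <;>
              exact hn.elim (by decide) (by decide)
          exact hp.trans_le (Nat.zero_le _)
      · intro heq
        have h1q : gain (myG.F 0) play245 = 1 := gain_eq_one _ _ 2 (Or.inr rfl)
        have := congrFun heq 0
        rw [h1q, p0] at this
        exact one_ne_zero this
    · -- outcome 0,1,4,4,… : player 1 deviates to reach 3
      exfalso
      have hs := hdev 1 (fun _ v => dev1 v) dev1_strat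
      set ρ' := outcome myG (updProfile σ 1 (fun _ v => dev1 v)) (0 : Fin 7)
        with hρ'def
      have hplay' : IsPlay myG.toArena ρ' :=
        outcome_isPlay _ _ (upd_strat σ hstrat 1 _ dev1_strat) _
      have h1' : ρ' 1 = 1 := by
        have he : ρ' 1 = σ 0 [] 0 := by
          rw [hρ'def, outcome_one]
          show updProfile σ 1 (fun _ v => dev1 v) 0 [] 0 = σ 0 [] 0
          unfold updProfile
          rw [if_neg (by decide : ¬ (0 : Fin 3) = 1)]
        rw [he]
        exact h1
      have h2' : ρ' 2 = 3 := by
        have e : ρ' 2 = (updProfile σ 1 (fun _ v => dev1 v))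
            (myG.owner (ρ' 1)) [0] (ρ' 1) := outcome_two _ _ _
        rw [h1'] at e
        rw [e]
        show updProfile σ 1 (fun _ v => dev1 v) 1 [0] 1 = 3
        unfold updProfile
        rw [if_pos rfl]
        decide
      have hgain' : gain (myG.F 1) ρ' = 1 := gain_eq_one _ _ 2 (h2' ▸ Or.inl rfl)
      have habs : ∀ k, 2 ≤ k → ρ k = 4 := play_absorb ρ hplay 4 rfl 2 h2
      have hvals := vals ρ 0 1 4 h0 h1 habs
      have hgain : gain (myG.F 1) ρ = 0 := by
        refine gain_eq_zero _ _ ?_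
        intro n hn
        rcases hvals n with h | h | h <;> rw [h] at hn <;>
          exact hn.elim (by decide) (by decide)
      rw [hgain', hgain] at hs
      exact Nat.not_succ_le_zero 0 hs
  · -- ρ 1 = 2
    have h2 : ρ 2 = 5 ∨ ρ 2 = 6 := by
      have e : ρ 2 ∈ nxt (ρ 1) := hplay 1
      rw [h1] at e
      have e2 : ρ 2 ∈ [(5 : Fin 7), 6] := e
      simpa using e2
    rcases h2 with h2 | h2
    · -- outcome 0,2,5,5,… : player 2 deviates to reach 6
      exfalso
      have hs := hdev 2 (fun _ v => dev2 v) dev2_strat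
      set ρ' := outcome myG (updProfile σ 2 (fun _ v => dev2 v)) (0 : Fin 7)
        with hρ'def
      have h1' : ρ' 1 = 2 := by
        have he : ρ' 1 = σ 0 [] 0 := by
          rw [hρ'def, outcome_one]
          show updProfile σ 2 (fun _ v => dev2 v) 0 [] 0 = σ 0 [] 0
          unfold updProfile
          rw [if_neg (by decide : ¬ (0 : Fin 3) = 2)]
        rw [he]
        exact h1
      have h2' : ρ' 2 = 6 := by
        have e : ρ' 2 = (updProfile σ 2 (fun _ v => dev2 v))
            (myG.owner (ρ' 1)) [0] (ρ' 1) := outcome_two _ _ _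
        rw [h1'] at e
        rw [e]
        show updProfile σ 2 (fun _ v => dev2 v) 2 [0] 2 = 6
        unfold updProfile
        rw [if_pos rfl]
        decide
      have hgain' : gain (myG.F 2) ρ' = 1 := gain_eq_one _ _ 2 (h2' ▸ Or.inr rfl)
      have habs : ∀ k, 2 ≤ k → ρ k = 5 := play_absorb ρ hplay 5 rfl 2 h2
      have hvals := vals ρ 0 2 5 h0 h1 habs
      have hgain : gain (myG.F 2) ρ = 0 := by
        refine gain_eq_zero _ _ ?_
        intro n hn
        rcases hvals n with h | h | h <;> rw [h] at hn <;>
          exact hn.elim (by decide) (by decide)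
      rw [hgain', hgain] at hs
      exact Nat.not_succ_le_zero 0 hs
    · -- outcome 0,2,6,6,… : gain profile (0,0,1), dominated by play134
      have habs : ∀ k, 2 ≤ k → ρ k = 6 := play_absorb ρ hplay 6 rfl 2 h2
      have hvals := vals ρ 0 2 6 h0 h1 habs
      have p0 : gain (myG.F 0) ρ = 0 := by
        refine gain_eq_zero _ _ ?_
        intro n hn
        rcases hvals n with h | h | h <;> rw [h] at hn <;>
          exact hn.elim (by decide) (by decide)
      refine not_paretoMax _ _ (fun i => gain (myG.F i) play134)
        ⟨play134, play134_isPlay, rfl, rfl⟩ ?_ ?_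
      · intro i
        fin_cases i
        · exact p0.trans_le (Nat.zero_le _)
        · have hp : gain (myG.F 1) ρ = 0 := by
            refine gain_eq_zero _ _ ?_
            intro n hn
            rcases hvals n with h | h | h <;> rw [h] at hn <;>
              exact hn.elim (by decide) (by decide)
          exact hp.trans_le (Nat.zero_le _)
        · have hq : gain (myG.F 2) play134 = 1 :=
            gain_eq_one _ _ 2 (Or.inl rfl)
          have hp : gain (myG.F 2) ρ = 1 := gain_eq_one _ _ 2 (h2 ▸ Or.inr rfl)
          exact hp.trans_le hq.ge
      · intro heq
        have h1q : gain (myG.F 0) play134 = 1 := gain_eq_one _ _ 2 (Or.inl rfl)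
        have := congrFun heq 0
        rw [h1q, p0] at this
        exact one_ne_zero this
end
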